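/- Let K be a number field, a ∈ K^× multiplicatively of infinite order, l a prime, and suppose that for some m the Kummer cocycle of a at level l^m is trivial on Gal(K(μ_{l^m}, a^{1/l^m})/K(μ_{l^m})). Then there is a constant λ = λ(K, l) independent of m, such that a^λ ∈ (K^×)^{l^m}. -/

import Mathlib

open IntermediateField Module

set_option synthInstance.maxHeartbeats 1000000
set_option maxHeartbeats 4000000

theorem aux_pow_mem_stmt17 {G : Type*} [CommGroup G] [Finite G] (H : Subgroup G) {D : ℕ}
    (hle : H.index ≤ D) (x : G) : x ^ (D.factorial) ∈ H := by
  have h0 : H.index ≠ 0 := Subgroup.index_ne_zero_of_finite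
  have hdvd : H.index ∣ D.factorial := Nat.dvd_factorial (Nat.pos_of_ne_zero h0) hle
  obtain ⟨k, hk⟩ := hdvd
  rw [hk, pow_mul]
  exact Subgroup.pow_mem H (H.pow_index_mem x) k

/-- Let `K` be a number field, `a ∈ Kˣ` of infinite multiplicative order and `l` a
prime. There is a constant `λ = λ(K,l)`, independent of `m`, such that whenever the
Kummer cocycle of `a` at level `l^m` is trivial on
`Gal(K(μ_{l^m}, a^{1/l^m})/K(μ_{l^m}))` (i.e. every `l^m`-th root of `a` in the
algebraic closure already lies in `K(μ_{l^m})`), one has `a^λ ∈ (Kˣ)^{l^m}`. -/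
theorem stmt17 {K : Type*} [Field K] [NumberField K] (l : ℕ) (hl : l.Prime)
    (a : Kˣ) (ha : ¬ IsOfFinOrder a) :
    ∃ lam : ℕ, 0 < lam ∧ ∀ m : ℕ,
      (∀ b : AlgebraicClosure K, b ^ (l ^ m) = algebraMap K (AlgebraicClosure K) (a : K) →
        b ∈ IntermediateField.adjoin K {x : AlgebraicClosure K | x ^ (l ^ m) = 1}) →
      ∃ c : K, c ^ (l ^ m) = (a : K) ^ lam := by
  classical
  set D := Module.finrank ℚ K with hD
  have hDpos : 0 < D := Module.finrank_pos
  set lamN : ℕ := (l + 1) ^ D.factorial with hlam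
  have hlamN1 : 1 < lamN := by
    have h2 : 2 ≤ l := hl.two_le
    calc 1 < l + 1 := by omega
    _ ≤ (l + 1) ^ D.factorial := Nat.le_self_pow (Nat.factorial_ne_zero D) _
  set N : ℕ := lamN - 1 with hNdef
  have hN1 : N + 1 = lamN := by omega
  have hNpos : 0 < N := by omega
  set m₀ : ℕ := N.factorization l with hm₀
  refine ⟨l ^ m₀, pow_pos hl.pos m₀, ?_⟩
  intro m hyp
  by_cases hmm : m ≤ m₀
  · exact ⟨(a : K) ^ (l ^ (m₀ - m)), by
      rw [← pow_mul, ← pow_add, Nat.sub_add_cancel hmm]⟩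
  have hm : 0 < m := by omega
  set Ω := AlgebraicClosure K
  have hlm : 0 < l ^ m := pow_pos hl.pos m
  set n : ℕ := l ^ m with hn
  haveI : NeZero n := ⟨hlm.ne'⟩
  obtain ⟨ζ, hζ⟩ :=
    IsCyclotomicExtension.exists_isPrimitiveRoot Ω (B := Ω) (S := {n}) (Set.mem_singleton n) hlm.ne'
  have hζint : IsIntegral K ζ := Algebra.IsIntegral.isIntegral (R := K) ζ
  set E : IntermediateField K Ω := K⟮ζ⟯ with hE
  have hadj : IntermediateField.adjoin K {x : Ω | x ^ (l ^ m) = 1} = E := by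
    apply le_antisymm
    · rw [IntermediateField.adjoin_le_iff]
      intro x hx
      obtain ⟨i, _, rfl⟩ := hζ.eq_pow_of_pow_eq_one hx
      exact pow_mem (IntermediateField.mem_adjoin_simple_self K ζ) i
    · rw [hE, IntermediateField.adjoin_simple_le_iff]
      exact IntermediateField.subset_adjoin K _ (by simpa using hζ.pow_eq_one)
  haveI : FiniteDimensional K E := IntermediateField.adjoin.finiteDimensional hζint
  haveI hcyc : IsCyclotomicExtension {n} K E := by
    have H := IntermediateField.adjoin_simple_toSubalgebra_of_isAlgebraic hζint.isAlgebraic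
    refine IsCyclotomicExtension.equiv _ _ _ (h := ?_) (.refl : E.toSubalgebra ≃ₐ[K] _)
    rw [H]
    exact hζ.adjoin_isCyclotomicExtension K
  haveI : IsGalois K E := IsCyclotomicExtension.isGalois {n} K E
  set ζE : E := IntermediateField.AdjoinSimple.gen K ζ with hζE'
  have hζE : IsPrimitiveRoot ζE n := by
    have : ((ζE : Ω)) = ζ := rfl
    rw [← IsPrimitiveRoot.coe_submonoidClass_iff (M := Ω)]
    rwa [this]
  -- degree bound
  haveI : FiniteDimensional ℚ E := Module.Finite.trans K E
  have hζEint : IsIntegral ℚ ζE := IsIntegral.of_finite ℚ ζE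
  set F₀ : IntermediateField ℚ E := ℚ⟮ζE⟯ with hF₀
  haveI : IsCyclotomicExtension {n} ℚ F₀ := by
    have H := IntermediateField.adjoin_simple_toSubalgebra_of_isAlgebraic hζEint.isAlgebraic
    refine IsCyclotomicExtension.equiv _ _ _ (h := ?_) (.refl : F₀.toSubalgebra ≃ₐ[ℚ] _)
    rw [H]
    exact hζE.adjoin_isCyclotomicExtension ℚ
  have hrk0 : finrank ℚ F₀ = (l ^ m).totient := by
    have := IsCyclotomicExtension.finrank (n := n) (K := ℚ) (L := F₀)
      (Polynomial.cyclotomic.irreducible_rat hlm)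
    simpa using this
  have htot : (l ^ m).totient ≤ D * finrank K E := by
    have h1 : finrank ℚ F₀ ≤ finrank ℚ E := F₀.toSubmodule.finrank_le
    have h2 : finrank ℚ E = D * finrank K E := (Module.finrank_mul_finrank ℚ K E).symm
    omega
  -- Galois group and the special automorphism
  haveI : NeZero (l ^ m) := ⟨hlm.ne'⟩
  have hfinj : Function.Injective (hζE.autToPow K) := hζE.autToPow_injective K
  set H := (hζE.autToPow K).range with hH
  have hHcard : Nat.card H = finrank K E := by
    rw [Nat.card_congr (MonoidHom.ofInjective hfinj).toEquiv.symm]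
    exact IsGalois.card_aut_eq_finrank K E
  have hGcard : Nat.card (ZMod (l ^ m))ˣ = (l ^ m).totient := by
    rw [Nat.card_eq_fintype_card]
    exact ZMod.card_units_eq_totient (l ^ m)
  have hidx : H.index ≤ D := by
    have h1 : H.index * Nat.card H = (l ^ m).totient := by
      rw [← hGcard]; exact H.index_mul_card
    have h2 : 0 < Nat.card H := by
      rw [hHcard]; exact finrank_pos
    have : H.index * Nat.card H ≤ D * Nat.card H := by
      rw [h1, hHcard]; exact htot
    exact Nat.le_of_mul_le_mul_right this h2
  have hcop : (l + 1).Coprime (l ^ m) :=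
    Nat.Coprime.pow_right m (by simp [Nat.coprime_self_add_left])
  have hu0 : (ZMod.unitOfCoprime (l + 1) hcop) ^ D.factorial ∈ H :=
    aux_pow_mem_stmt17 H hidx _
  obtain ⟨σ, hσ⟩ := hu0
  have horder : orderOf ζE = l ^ m := hζE.eq_orderOf.symm
  have hcoe : (((ZMod.unitOfCoprime (l + 1) hcop) ^ D.factorial : (ZMod (l ^ m))ˣ) : ZMod (l ^ m))
      = ((lamN : ℕ) : ZMod (l ^ m)) := by
    rw [Units.val_pow_eq_pow_val, ZMod.coe_unitOfCoprime, hlam]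
    push_cast
    ring
  have hσζ : σ ζE = ζE ^ lamN := by
    rw [← hζE.autToPow_spec K σ]
    have hval : (ZMod.val (((hζE.autToPow K σ : (ZMod n)ˣ)) : ZMod n))
        = lamN % l ^ m := by
      rw [hσ, hcoe, ZMod.val_natCast]
    rw [hval, ← horder, pow_mod_orderOf]
  have hσpow : ∀ x : E, x ^ (l ^ m) = 1 → σ x = x ^ lamN := by
    intro x hx
    obtain ⟨i, _, rfl⟩ := hζE.eq_pow_of_pow_eq_one hx
    rw [map_pow, hσζ, ← pow_mul, ← pow_mul, mul_comm]
  have hcomm : ∀ s t : E ≃ₐ[K] E, s * t = t * s := fun s t =>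
    hfinj (by rw [map_mul, map_mul, mul_comm])
  clear hcoe hσ
  -- the root b and the cocycle computation
  obtain ⟨b, hb⟩ := IsAlgClosed.exists_pow_nat_eq (algebraMap K Ω (a : K)) hlm
  have hbE : b ∈ E := hadj ▸ hyp b hb
  set bE : E := ⟨b, hbE⟩ with hbE'
  have hbpow : bE ^ (l ^ m) = algebraMap K E (a : K) := Subtype.ext hb
  have haE : algebraMap K E (a : K) ≠ 0 := by
    simpa using a.ne_zero
  have hbne : bE ≠ 0 := fun h => haE (by rw [← hbpow, h, zero_pow hlm.ne'])
  set u : E := σ bE / bE with hu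
  have hσbne : σ bE ≠ 0 := fun h => hbne (by simpa using σ.injective (h.trans (map_zero σ).symm))
  have hune : u ≠ 0 := div_ne_zero hσbne hbne
  have hupow : u ^ (l ^ m) = 1 := by
    rw [hu, div_pow, ← map_pow, hbpow, AlgEquiv.commutes, div_self haE]
  have key : ∀ τ : E ≃ₐ[K] E, τ (bE ^ N / u) = bE ^ N / u := by
    intro τ
    set c : E := τ bE / bE with hc
    have hτbne : τ bE ≠ 0 := fun h => hbne (by simpa using τ.injective (h.trans (map_zero τ).symm))
    have hcne : c ≠ 0 := div_ne_zero hτbne hbne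
    have hcpow : c ^ (l ^ m) = 1 := by
      rw [hc, div_pow, ← map_pow, hbpow, AlgEquiv.commutes, div_self haE]
    have hσc : σ c = c ^ lamN := hσpow c hcpow
    have hτbE : τ bE = c * bE := by rw [hc, div_mul_cancel₀ _ hbne]
    have hσbE : σ bE = u * bE := by rw [hu, div_mul_cancel₀ _ hbne]
    have hcomm' : σ (τ bE) = τ (σ bE) := by
      have h := hcomm σ τ
      calc σ (τ bE) = (σ * τ) bE := rfl
      _ = (τ * σ) bE := by rw [h]
      _ = τ (σ bE) := rfl
    have h : c ^ lamN * (u * bE) = τ u * (c * bE) := by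
      rw [← hσc, ← hσbE, ← map_mul, ← hτbE, hcomm', hσbE, map_mul, hτbE]
    have h3 : c ^ lamN * u = τ u * c :=
      mul_right_cancel₀ hbne (by rw [mul_assoc, mul_assoc]; exact h)
    have hτune : τ u ≠ 0 := fun hh => hune (by simpa using τ.injective (hh.trans (map_zero τ).symm))
    have h4 : c ^ N * u = τ u := by
      have hcc : c ^ lamN = c ^ N * c := by
        rw [← pow_succ, hN1]
      rw [hcc] at h3
      apply mul_right_cancel₀ hcne
      rw [mul_comm (τ u) c] at h3
      linear_combination h3
    rw [map_div₀, map_pow, hτbE, div_eq_div_iff hτune hune, mul_pow, ← h4]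
    ring
  -- descend to K
  have hfixtop : IntermediateField.fixingSubgroup (⊥ : IntermediateField K E) = ⊤ := by
    ext τ
    simp only [Subgroup.mem_top, iff_true, IntermediateField.mem_fixingSubgroup_iff]
    intro x hx
    obtain ⟨y, rfl⟩ := IntermediateField.mem_bot.mp hx
    exact τ.commutes y
  have hfix : IntermediateField.fixedField (⊤ : Subgroup (E ≃ₐ[K] E)) = ⊥ := by
    rw [← hfixtop, IsGalois.fixedField_fixingSubgroup]
  have hdbot : bE ^ N / u ∈ (⊥ : IntermediateField K E) := by
    rw [← hfix]
    exact fun g => key g.1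
  obtain ⟨c0, hc0⟩ := IntermediateField.mem_bot.mp hdbot
  have hc0pow : c0 ^ (l ^ m) = (a : K) ^ N := by
    apply (algebraMap K E).injective
    rw [map_pow, hc0, div_pow, hupow, div_one, ← pow_mul, mul_comm, pow_mul, hbpow, map_pow]
  -- final arithmetic
  have hNw : l ^ m₀ * (N / l ^ m₀) = N := Nat.ordProj_mul_ordCompl_eq_self N l
  set w := N / l ^ m₀ with hwdef
  have hlw : ¬ l ∣ w := Nat.not_dvd_ordCompl hl hNpos.ne'
  have hcopw : w.Coprime (l ^ m) :=
    Nat.Coprime.pow_right m (Nat.coprime_comm.mp ((Nat.Prime.coprime_iff_not_dvd hl).mpr hlw))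
  obtain ⟨w', hww'⟩ := Nat.exists_mul_mod_eq_one_of_coprime hcopw
    (Nat.one_lt_pow hm.ne' hl.one_lt)
  set t := w * w' / l ^ m with htdef
  have ht : w * w' = l ^ m * t + 1 := by
    conv_lhs => rw [← Nat.div_add_mod (w * w') (l ^ m)]
    rw [hww'.2, htdef]
  refine ⟨c0 ^ w' / (a : K) ^ (l ^ m₀ * t), ?_⟩
  have haK : (a : K) ≠ 0 := a.ne_zero
  rw [div_pow, div_eq_iff (pow_ne_zero _ (pow_ne_zero _ haK))]
  have hexp : N * w' = l ^ m₀ + l ^ m₀ * t * l ^ m := by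
    calc N * w' = l ^ m₀ * (w * w') := by rw [← hNw]; ring
    _ = l ^ m₀ * (l ^ m * t + 1) := by rw [ht]
    _ = l ^ m₀ + l ^ m₀ * t * l ^ m := by ring
  calc (c0 ^ w') ^ l ^ m = (c0 ^ l ^ m) ^ w' := by rw [← pow_mul, mul_comm, pow_mul]
  _ = ((a : K) ^ N) ^ w' := by rw [hc0pow]
  _ = (a : K) ^ (N * w') := by rw [← pow_mul]
  _ = (a : K) ^ l ^ m₀ * ((a : K) ^ (l ^ m₀ * t)) ^ l ^ m := by
      rw [hexp, pow_add, ← pow_mul]
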